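/- arXiv:1809.06224 — 2 statements merged into one kernel-verified Lean document; each statement's English description precedes it below -/
import Mathlib

section
/- Let n ≥ 2 and let Σ = {γ_{i,j} : 1 ≤ i ≠ j ≤ n} be the root system of sl(n,ℂ), where γ_{i,j} = e_i* − e_j* on the diagonal Cartan subalgebra. Suppose S ⊆ Σ is closed under addition (i.e., if χ₁, χ₂ ∈ S and χ₁ + χ₂ ∈ Σ then χ₁ + χ₂ ∈ S) and |Σ \ S| < 2n − 2. Then for every pair i ≠ j, either γ_{i,j} ∈ S or γ_{j,i} ∈ S. -/
/-- Roots of sl(n,ℂ) as ordered pairs (i,j), i ≠ j. If S ⊆ Σ is closed under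
root addition and |Σ \ S| < 2n - 2, then for every i ≠ j, (i,j) ∈ S or (j,i) ∈ S. -/
theorem stmt0 (n : ℕ) (hn : 2 ≤ n)
    (S : Finset (Fin n × Fin n))
    (hSsub : S ⊆ (Finset.univ.filter (fun p : Fin n × Fin n => p.1 ≠ p.2)))
    (hclosed : ∀ i k j : Fin n, i ≠ j → (i, k) ∈ S → (k, j) ∈ S → (i, j) ∈ S)
    (hcard : ((Finset.univ.filter (fun p : Fin n × Fin n => p.1 ≠ p.2)) \ S).card
        < 2 * n - 2) :
    ∀ i j : Fin n, i ≠ j → (i, j) ∈ S ∨ (j, i) ∈ S := by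
  classical
  intro i j hij
  by_contra hcon
  push_neg at hcon
  obtain ⟨hij1, hij2⟩ := hcon
  set T := (Finset.univ.filter (fun p : Fin n × Fin n => p.1 ≠ p.2)) \ S with hT
  set f : Fin n × Bool → Fin n × Fin n := fun p =>
    if p.1 = i then (if p.2 then (i, j) else (j, i))
    else if p.2 then (if (i, p.1) ∈ S then (p.1, j) else (i, p.1))
    else (if (j, p.1) ∈ S then (p.1, i) else (j, p.1)) with hf
  set D := (Finset.univ.erase j) ×ˢ (Finset.univ : Finset Bool) with hD
  have hmemT : ∀ p ∈ D, f p ∈ T := by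
    rintro ⟨k, b⟩ hp
    have hkj : k ≠ j := by
      simp [hD, Finset.mem_product] at hp
      exact hp
    simp only [hf]
    by_cases hki : k = i
    · subst hki
      cases b <;>
        simp [hT, Finset.mem_sdiff, Finset.mem_filter, hij, Ne.symm hij, hij1, hij2]
    · cases b
      · by_cases h1 : (j, k) ∈ S
        · have h2 : (k, i) ∉ S := fun h2 => hij2 (hclosed j k i (Ne.symm hij) h1 h2)
          simp [hki, h1, h2, hT, Finset.mem_sdiff, Finset.mem_filter]
        · simp [hki, h1, hT, Finset.mem_sdiff, Finset.mem_filter, Ne.symm hkj]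
      · by_cases h1 : (i, k) ∈ S
        · have h2 : (k, j) ∉ S := fun h2 => hij1 (hclosed i k j hij h1 h2)
          simp [hki, h1, h2, hT, Finset.mem_sdiff, Finset.mem_filter, hkj]
        · simp [hki, h1, hT, Finset.mem_sdiff, Finset.mem_filter, Ne.symm hki]
  have hval : ∀ k : Fin n, k ≠ j →
      (f (k, true) = (i, k) ∨ f (k, true) = (k, j)) ∧
      (f (k, false) = (j, k) ∨ f (k, false) = (k, i)) := by
    intro k hk
    by_cases hki : k = i
    · subst hki
      exact ⟨Or.inr (by simp [hf]), Or.inl (by simp [hf])⟩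
    · constructor
      · by_cases h1 : (i, k) ∈ S
        · exact Or.inr (by simp [hf, hki, h1])
        · exact Or.inl (by simp [hf, hki, h1])
      · by_cases h1 : (j, k) ∈ S
        · exact Or.inr (by simp [hf, hki, h1])
        · exact Or.inl (by simp [hf, hki, h1])
  have hne : ∀ p ∈ D, (f p).1 ≠ (f p).2 := by
    intro p hp
    have := hmemT p hp
    simp [hT, Finset.mem_sdiff, Finset.mem_filter] at this
    exact this.1
  have hinj : Set.InjOn f D := by
    rintro ⟨k, b⟩ hk ⟨k', b'⟩ hk' heq
    simp only [Finset.mem_coe, hD, Finset.mem_product, Finset.mem_erase] at hk hk'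
    have hkj : k ≠ j := hk.1.1
    have hk'j : k' ≠ j := hk'.1.1
    have hne1 : (f (k, b)).1 ≠ (f (k, b)).2 := hne _ (by
      simp [hD, Finset.mem_product, hkj])
    have hne2 : (f (k', b')).1 ≠ (f (k', b')).2 := hne _ (by
      simp [hD, Finset.mem_product, hk'j])
    obtain ⟨hv1, hv2⟩ := hval k hkj
    obtain ⟨hw1, hw2⟩ := hval k' hk'j
    clear_value T f D
    clear hmemT hne hval hcard hSsub hclosed hij1 hij2 hk hk' hT hD hf D T S
    cases b <;> cases b' <;>
      [ (rcases hv2 with h | h <;> rcases hw2 with h' | h');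
        (rcases hv2 with h | h <;> rcases hw1 with h' | h');
        (rcases hv1 with h | h <;> rcases hw2 with h' | h');
        (rcases hv1 with h | h <;> rcases hw1 with h' | h')] <;>
      rw [h] at heq hne1 <;> rw [h'] at heq hne2 <;>
      simp_all [Prod.ext_iff]
  have hcardD : D.card = 2 * n - 2 := by
    simp [hD, Finset.card_product, Finset.card_erase_of_mem]
    omega
  have := Finset.card_le_card_of_injOn f hmemT hinj
  omega
end

section
/- Let n ≥ 2, i ≠ j in [n], and S ⊆ Σ = {(u,v) : u ≠ v} be closed under root addition. If |Σ \ S| < 2n−2, then at least one of the 2n−2 pairwise disjoint sets {(i,j)}, {(j,i)}, {(i,k),(k,j)}, {(j,k),(k,i)} (k ∉ {i,j}) is entirely contained in S; in each case one deduces (i,j) ∈ S or (j,i) ∈ S. -/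
/-- The family of 2n-2 subsets of the root system: for fixed i ≠ j, the sets
{(i,j)}, {(j,i)}, and for each k ∉ {i,j}, {(i,k),(k,j)} and {(j,k),(k,i)}. -/
def rootFam (n : ℕ) (i j : Fin n) :
    Unit ⊕ Unit ⊕ {k : Fin n // k ≠ i ∧ k ≠ j} ⊕ {k : Fin n // k ≠ i ∧ k ≠ j} →
      Finset (Fin n × Fin n)
  | Sum.inl _ => {(i, j)}
  | Sum.inr (Sum.inl _) => {(j, i)}
  | Sum.inr (Sum.inr (Sum.inl k)) => {(i, k.1), (k.1, j)}
  | Sum.inr (Sum.inr (Sum.inr k)) => {(j, k.1), (k.1, i)}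

lemma mem_rootFam_ne {n : ℕ} {i j : Fin n} (hij : i ≠ j)
    (a : Unit ⊕ Unit ⊕ {k : Fin n // k ≠ i ∧ k ≠ j} ⊕ {k : Fin n // k ≠ i ∧ k ≠ j})
    (p : Fin n × Fin n) (hp : p ∈ rootFam n i j a) : p.1 ≠ p.2 := by
  rcases a with _ | _ | ⟨k, hk1, hk2⟩ | ⟨k, hk1, hk2⟩ <;>
    simp only [rootFam, Finset.mem_singleton, Finset.mem_insert] at hp <;>
    (try rcases hp with hp | hp) <;>
    simp_all [Prod.ext_iff, Fin.ext_iff] <;> omega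

lemma rootFam_eq_of_mem {n : ℕ} {i j : Fin n} (hij : i ≠ j)
    (a b : Unit ⊕ Unit ⊕ {k : Fin n // k ≠ i ∧ k ≠ j} ⊕ {k : Fin n // k ≠ i ∧ k ≠ j})
    (p : Fin n × Fin n) (ha : p ∈ rootFam n i j a) (hb : p ∈ rootFam n i j b) :
    a = b := by
  rcases a with _ | _ | ⟨k, hk1, hk2⟩ | ⟨k, hk1, hk2⟩ <;>
    rcases b with _ | _ | ⟨l, hl1, hl2⟩ | ⟨l, hl1, hl2⟩ <;>
    simp only [rootFam, Finset.mem_singleton, Finset.mem_insert] at ha hb <;>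
    (try rcases ha with ha | ha) <;> (try rcases hb with hb | hb) <;>
    simp_all [Prod.ext_iff, Fin.ext_iff, Subtype.ext_iff] <;> omega

/-- If S is closed under root addition and |Σ \ S| < 2n - 2, then one of the
2n-2 pairwise disjoint sets is entirely contained in S, and in each case one
deduces (i,j) ∈ S or (j,i) ∈ S. -/
theorem stmt2 (n : ℕ) (hn : 2 ≤ n) (i j : Fin n) (hij : i ≠ j)
    (S : Finset (Fin n × Fin n))
    (hSsub : S ⊆ (Finset.univ.filter (fun p : Fin n × Fin n => p.1 ≠ p.2)))
    (hclosed : ∀ u k v : Fin n, u ≠ v → (u, k) ∈ S → (k, v) ∈ S → (u, v) ∈ S)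
    (hcard : ((Finset.univ.filter (fun p : Fin n × Fin n => p.1 ≠ p.2)) \ S).card
        < 2 * n - 2) :
    (∃ a, rootFam n i j a ⊆ S) ∧ ((i, j) ∈ S ∨ (j, i) ∈ S) := by
  have key : ∃ a, rootFam n i j a ⊆ S := by
    by_contra h
    push_neg at h
    choose f hf hfS using fun a => Finset.not_subset.mp (h a)
    have hfSig : ∀ a, f a ∈
        (Finset.univ.filter (fun p : Fin n × Fin n => p.1 ≠ p.2)) \ S := by
      intro a
      simp only [Finset.mem_sdiff, Finset.mem_filter, Finset.mem_univ, true_and]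
      exact ⟨mem_rootFam_ne hij a (f a) (hf a), hfS a⟩
    have hinj : Function.Injective f := by
      intro a b hab
      exact rootFam_eq_of_mem hij a b (f a) (hf a) (hab ▸ hf b)
    have hcard2 : Fintype.card
        (Unit ⊕ Unit ⊕ {k : Fin n // k ≠ i ∧ k ≠ j} ⊕ {k : Fin n // k ≠ i ∧ k ≠ j})
        = 2 * n - 2 := by
      have hsub : Fintype.card {k : Fin n // k ≠ i ∧ k ≠ j} = n - 2 := by
        rw [Fintype.card_subtype]
        have hfil : Finset.univ.filter (fun k : Fin n => k ≠ i ∧ k ≠ j)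
            = Finset.univ \ {i, j} := by
          ext k
          simp [Finset.mem_sdiff]
        rw [hfil, Finset.card_sdiff_of_subset (by simp)]
        rw [Finset.card_insert_of_notMem (by simpa using hij)]
        simp
      simp only [Fintype.card_sum, Fintype.card_unit, hsub]
      omega
    have hle := Finset.card_le_card_of_injOn (s := Finset.univ) f (fun a _ => hfSig a) hinj.injOn
    rw [Finset.card_univ, hcard2] at hle
    omega
  refine ⟨key, ?_⟩
  obtain ⟨a, ha⟩ := key
  rcases a with _ | _ | ⟨k, hk1, hk2⟩ | ⟨k, hk1, hk2⟩
  · exact Or.inl (ha (by simp [rootFam]))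
  · exact Or.inr (ha (by simp [rootFam]))
  · exact Or.inl (hclosed i k j hij (ha (by simp [rootFam])) (ha (by simp [rootFam])))
  · exact Or.inr (hclosed j k i hij.symm (ha (by simp [rootFam])) (ha (by simp [rootFam])))
end
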